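/- For each integer n ≥ 0: a1(0, 4n+2) = (−1)^n · 2^{−(4n+1)/2} · C(2n, n), a1(0, 4n) = 0, a2(0, 4n+2) = 0, and (for n ≥ 1) a2(0, 4n) = (−1)^n · 2^{−(4n−1)/2} · C(2n−1, n). -/

import Mathlib

open scoped BigOperators

noncomputable section

section Identities
open Finset Polynomial

def SA (p q : ℕ) : ℤ := ∑ j ∈ Finset.range (q+1), (-1)^j * p.choose j * q.choose j
def SB (p q : ℕ) : ℤ := ∑ j ∈ Finset.range (q+1), (-1)^j * p.choose (j+1) * q.choose j

lemma one_sub_X_pow_coeff (N k : ℕ) :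
    ((1 - X : ℤ[X]) ^ N).coeff k = (-1)^k * N.choose k := by
  have h : (1 - X : ℤ[X]) = (-1) * (X + C (-1)) := by
    rw [mul_add, C_neg, C_1]; ring
  rw [h, mul_pow, ← C_1, ← C_neg, ← C_pow, coeff_C_mul, coeff_X_add_C_pow]
  rcases le_or_gt k N with hk | hk
  · have h2 : (-1:ℤ)^N * (-1)^(N-k) = (-1)^k := by
      rw [← pow_add]
      have h3 : N + (N - k) = k + 2*(N-k) := by omega
      rw [h3, pow_add, pow_mul]; simp
    rw [← mul_assoc, h2]
  · simp [Nat.choose_eq_zero_of_lt hk]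

lemma one_sub_sq_coeff (N m : ℕ) (hm : m ≤ N) :
    ((1 - X^2 : ℤ[X]) ^ N).coeff (2*m) = (-1)^m * N.choose m := by
  have h : (1 - X^2 : ℤ[X]) ^ N
      = ∑ k ∈ Finset.range (N+1), C ((-1)^k * (N.choose k : ℤ)) * X^(2*k) := by
    have h0 : (1 - X^2 : ℤ[X]) = (-X^2) + 1 := by ring
    rw [h0, add_pow]
    refine Finset.sum_congr rfl fun k hk => ?_
    have : (-X^2 : ℤ[X])^k = C ((-1)^k) * X^(2*k) := by
      rw [neg_pow, ← pow_mul, ← C_1, ← C_neg, ← C_pow]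
    rw [this, one_pow, mul_one, C_mul, C_eq_natCast]; ring
  rw [h, finset_sum_coeff]
  rw [Finset.sum_eq_single m]
  · rw [coeff_C_mul, coeff_X_pow]; simp
  · intro b _ hb
    have : (2*m) ≠ 2*b := by omega
    rw [coeff_C_mul, coeff_X_pow, if_neg this, mul_zero]
  · intro h; exact absurd (mem_range.2 (Nat.lt_succ_of_le hm)) h

lemma neg_one_pow_sub {a b : ℕ} (h : b ≤ a) : (-1:ℤ)^(a-b) = (-1)^a * (-1)^b := by
  obtain ⟨c, rfl⟩ : ∃ c, a = b + c := ⟨a - b, by omega⟩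
  have hb : (-1:ℤ)^b * (-1)^b = 1 := by rw [← mul_pow]; simp
  calc (-1:ℤ)^(b+c-b) = (-1)^c := by congr 1; omega
    _ = ((-1)^b*(-1)^b) * (-1)^c := by rw [hb, one_mul]
    _ = (-1)^(b+c) * (-1)^b := by rw [pow_add]; ring

lemma prod_coeff (N k : ℕ) :
    ∑ i ∈ Finset.range (k+1), (N.choose i : ℤ) * ((-1)^(k-i) * N.choose (k-i))
      = ((1 - X^2 : ℤ[X])^N).coeff k := by
  have h : (1 - X^2 : ℤ[X])^N = (1+X)^N * (1-X)^N := by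
    rw [← mul_pow]; ring_nf
  rw [h, coeff_mul, Finset.Nat.sum_antidiagonal_eq_sum_range_succ_mk]
  refine Finset.sum_congr rfl fun i hi => ?_
  rw [coeff_one_add_X_pow, one_sub_X_pow_coeff]

lemma SA_diag_even (m : ℕ) : SA (2*m) (2*m) = (-1)^m * ((2*m).choose m) := by
  have h := prod_coeff (2*m) (2*m)
  rw [one_sub_sq_coeff _ _ (by omega)] at h
  rw [← h, SA]
  refine Finset.sum_congr rfl fun i hi => ?_
  have hi' : i ≤ 2*m := by simpa [Nat.lt_succ_iff] using hi
  rw [Nat.choose_symm hi', neg_one_pow_sub hi']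
  have : ((-1:ℤ))^(2*m) = 1 := by rw [pow_mul]; simp
  rw [this]; ring

lemma SB_diag_odd (m : ℕ) : SB (2*m+1) (2*m+1) = (-1)^m * ((2*m+1).choose (m+1)) := by
  have h := prod_coeff (2*m+1) (2*m+2)
  have h2 : (2:ℕ)*(m+1) = 2*m+2 := by ring
  have h3 := one_sub_sq_coeff (2*m+1) (m+1) (by omega)
  rw [h2] at h3
  rw [h3] at h
  rw [Finset.sum_range_succ' _ (2*m+2)] at h
  have hz : ((2*m+1).choose 0 : ℤ) * ((-1)^(2*m+2-0) * (2*m+1).choose (2*m+2-0)) = 0 := by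
    have : (2*m+1).choose (2*m+2) = 0 := Nat.choose_eq_zero_of_lt (by omega)
    simp [this]
  rw [hz, add_zero] at h
  have h4 : ∑ j ∈ Finset.range (2*m+2),
      ((2*m+1).choose (j+1) : ℤ) * ((-1)^(2*m+2-(j+1)) * (2*m+1).choose (2*m+2-(j+1)))
      = - SB (2*m+1) (2*m+1) := by
    rw [SB, ← Finset.sum_neg_distrib]
    refine Finset.sum_congr rfl fun j hj => ?_
    have hj' : j ≤ 2*m+1 := by simpa [Nat.lt_succ_iff] using hj
    have e1 : 2*m+2-(j+1) = (2*m+1) - j := by omega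
    rw [e1, Nat.choose_symm hj', neg_one_pow_sub hj']
    have : ((-1:ℤ))^(2*m+1) = -1 := by rw [pow_add, pow_mul]; simp
    rw [this]; ring
  rw [h4] at h
  have h5 : ((-1:ℤ))^(m+1) = -(-1)^m := by rw [pow_succ]; ring
  rw [h5] at h
  linarith [h]

lemma SA_diag_odd (m : ℕ) : SA (2*m+1) (2*m+1) = 0 := by
  set N := 2*m+1 with hN
  have h := Finset.sum_range_reflect
    (fun j => (-1:ℤ)^j * N.choose j * N.choose j) (N+1)
  have h2 : ∀ j ∈ Finset.range (N+1),
      (fun j => (-1:ℤ)^j * N.choose j * N.choose j) (N+1-1-j)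
        = -((-1:ℤ)^j * N.choose j * N.choose j) := by
    intro j hj
    have hj' : j ≤ N := by simpa [Nat.lt_succ_iff] using hj
    simp only
    have e1 : N+1-1-j = N - j := by omega
    rw [e1, Nat.choose_symm hj', neg_one_pow_sub hj']
    have : ((-1:ℤ))^N = -1 := by rw [hN, pow_add, pow_mul]; simp
    rw [this]; ring
  rw [Finset.sum_congr rfl h2] at h
  rw [Finset.sum_neg_distrib] at h
  have : SA N N = ∑ j ∈ Finset.range (N+1), (-1:ℤ)^j * N.choose j * N.choose j := rfl
  rw [this]; linarith [h]

lemma SB_diag_even (m : ℕ) : SB (2*m) (2*m) = 0 := by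
  set N := 2*m with hN
  have hlast : SB N N = ∑ j ∈ Finset.range N, (-1:ℤ)^j * N.choose (j+1) * N.choose j := by
    rw [SB, Finset.sum_range_succ]
    have : N.choose (N+1) = 0 := Nat.choose_eq_zero_of_lt (by omega)
    simp [this]
  have h := Finset.sum_range_reflect
    (fun j => (-1:ℤ)^j * N.choose (j+1) * N.choose j) N
  have h2 : ∀ j ∈ Finset.range N,
      (fun j => (-1:ℤ)^j * N.choose (j+1) * N.choose j) (N-1-j)
        = -((-1:ℤ)^j * N.choose (j+1) * N.choose j) := by
    intro j hj
    have hj' : j < N := by simpa using hj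
    simp only
    have e1 : N-1-j+1 = N - j := by omega
    have e2 : N-1-j = N - (j+1) := by omega
    rw [e1, e2, Nat.choose_symm (by omega : j ≤ N), Nat.choose_symm (by omega : j+1 ≤ N)]
    have e3 : (-1:ℤ)^(N-(j+1)) = (-1)^N * (-1)^(j+1) := neg_one_pow_sub (by omega)
    rw [e3]
    have : ((-1:ℤ))^N = 1 := by rw [hN, pow_mul]; simp
    rw [this, pow_succ]; ring
  rw [Finset.sum_congr rfl h2, Finset.sum_neg_distrib] at h
  rw [hlast]; linarith [h]

lemma SB_succ_left (p q : ℕ) : SB (p+1) q = SB p q + SA p q := by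
  rw [SB, SB, SA, ← Finset.sum_add_distrib]
  refine Finset.sum_congr rfl fun j hj => ?_
  rw [Nat.choose_succ_succ]
  push_cast
  ring

lemma SA_succ_right (p q : ℕ) : SA p (q+1) = SA p q - SB p q := by
  rw [SA, Finset.sum_range_succ' _ (q+1)]
  have h0 : (-1:ℤ)^0 * p.choose 0 * (q+1).choose 0 = 1 := by simp
  rw [h0]
  have h1 : ∀ j ∈ Finset.range (q+1),
      (-1:ℤ)^(j+1) * p.choose (j+1) * (q+1).choose (j+1)
      = ((-1:ℤ)^(j+1) * p.choose (j+1) * q.choose (j+1))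
        + (-((-1:ℤ)^j * p.choose (j+1) * q.choose j)) := by
    intro j hj
    rw [Nat.choose_succ_succ]
    push_cast
    ring
  rw [Finset.sum_congr rfl h1, Finset.sum_add_distrib]
  have h2 : ∑ j ∈ Finset.range (q+1), -((-1:ℤ)^j * p.choose (j+1) * q.choose j)
      = - SB p q := by
    rw [SB, Finset.sum_neg_distrib]
  rw [h2]
  have h3 : ∑ j ∈ Finset.range (q+1), (-1:ℤ)^(j+1) * p.choose (j+1) * q.choose (j+1)
      = ∑ j ∈ Finset.range q, (-1:ℤ)^(j+1) * p.choose (j+1) * q.choose (j+1) := by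
    rw [Finset.sum_range_succ]
    have : q.choose (q+1) = 0 := Nat.choose_eq_zero_of_lt (by omega)
    simp [this]
  rw [h3]
  have h4 : SA p q = ∑ j ∈ Finset.range q, (-1:ℤ)^(j+1) * p.choose (j+1) * q.choose (j+1) + 1 := by
    rw [SA, Finset.sum_range_succ' _ q]
    simp
  rw [h4]
  ring

lemma SB_zero_left (q : ℕ) : SB 0 q = 0 := by
  rw [SB]
  apply Finset.sum_eq_zero
  intro j hj
  simp [Nat.choose_eq_zero_of_lt (Nat.succ_pos j)]

lemma SA_zero_right (p : ℕ) : SA p 0 = 1 := by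
  rw [SA]
  simp

end Identities

def endpt {n : ℕ} (d : Fin n → Bool) : ℤ :=
  ∑ i, (if d i then (1 : ℤ) else -1)

def turns {n : ℕ} (d : Fin n → Bool) : ℕ :=
  ((Finset.range n).filter fun i =>
    ∃ h : i + 1 < n, d ⟨i, Nat.lt_of_succ_lt h⟩ ≠ d ⟨i + 1, h⟩).card

def pathsTo (x : ℤ) (n : ℕ) : Finset (Fin n → Bool) :=
  Finset.univ.filter fun d => (∃ h : 0 < n, d ⟨0, h⟩ = true) ∧ endpt d = x

def am (x t : ℤ) (m ε : ℝ) : ℂ :=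
  (1 + m ^ 2 * ε ^ 2 : ℂ) ^ ((1 - (t : ℂ)) / 2) * Complex.I *
    ∑ d ∈ pathsTo x t.toNat, (-Complex.I * (m * ε)) ^ turns d

def a (x t : ℤ) : ℂ :=
  (2 : ℂ) ^ ((1 - (t : ℂ)) / 2) * Complex.I *
    ∑ d ∈ pathsTo x t.toNat, (-Complex.I) ^ turns d

-- snoc value lemmas
lemma snoc_lt {n : ℕ} (d : Fin (n+1) → Bool) (c : Bool) (i : ℕ) (h2 : i < n+2) (h : i < n+1) :
    (Fin.snoc d c : Fin (n+2) → Bool) ⟨i, h2⟩ = d ⟨i, h⟩ := by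
  have : (⟨i, h2⟩ : Fin (n+2)) = Fin.castSucc ⟨i, h⟩ := rfl
  rw [this, Fin.snoc_castSucc]

lemma snoc_top {n : ℕ} (d : Fin (n+1) → Bool) (c : Bool) (h2 : n+1 < n+2) :
    (Fin.snoc d c : Fin (n+2) → Bool) ⟨n+1, h2⟩ = c := by
  have : (⟨n+1, h2⟩ : Fin (n+2)) = Fin.last (n+1) := rfl
  rw [this, Fin.snoc_last]

lemma endpt_snoc {n : ℕ} (d : Fin (n+1) → Bool) (c : Bool) :
    endpt (Fin.snoc d c : Fin (n+2) → Bool) = endpt d + (if c then 1 else -1) := by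
  rw [endpt, Fin.sum_univ_castSucc]
  simp [endpt, Fin.snoc_castSucc]

lemma turns_snoc {n : ℕ} (d : Fin (n+1) → Bool) (c : Bool) :
    turns (Fin.snoc d c : Fin (n+2) → Bool) = turns d + (if d (Fin.last n) = c then 0 else 1) := by
  classical
  rw [turns, turns]
  have e1 : (Finset.range (n+2)).filter (fun i =>
      ∃ h : i + 1 < n+2, (Fin.snoc d c : Fin (n+2) → Bool) ⟨i, Nat.lt_of_succ_lt h⟩ ≠ (Fin.snoc d c : Fin (n+2) → Bool) ⟨i + 1, h⟩)
      = (Finset.range (n+1)).filter (fun i =>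
      ∃ h : i + 1 < n+2, (Fin.snoc d c : Fin (n+2) → Bool) ⟨i, Nat.lt_of_succ_lt h⟩ ≠ (Fin.snoc d c : Fin (n+2) → Bool) ⟨i + 1, h⟩) := by
    rw [Finset.range_add_one, Finset.filter_insert, if_neg]
    push_neg
    intro h
    omega
  rw [e1]
  have e2 : (Finset.range (n+1)).filter (fun i =>
      ∃ h : i + 1 < n+1, d ⟨i, Nat.lt_of_succ_lt h⟩ ≠ d ⟨i + 1, h⟩)
      = (Finset.range n).filter (fun i =>
      ∃ h : i + 1 < n+1, d ⟨i, Nat.lt_of_succ_lt h⟩ ≠ d ⟨i + 1, h⟩) := by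
    rw [Finset.range_add_one, Finset.filter_insert, if_neg]
    push_neg
    intro h
    omega
  rw [e2]
  rw [Finset.range_add_one, Finset.filter_insert]
  have e3 : (Finset.range n).filter (fun i =>
      ∃ h : i + 1 < n+2, (Fin.snoc d c : Fin (n+2) → Bool) ⟨i, Nat.lt_of_succ_lt h⟩ ≠ (Fin.snoc d c : Fin (n+2) → Bool) ⟨i + 1, h⟩)
      = (Finset.range n).filter (fun i =>
      ∃ h : i + 1 < n+1, d ⟨i, Nat.lt_of_succ_lt h⟩ ≠ d ⟨i + 1, h⟩) := by
    apply Finset.filter_congr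
    intro i hi
    have hi' : i < n := Finset.mem_range.mp hi
    constructor
    · rintro ⟨h, hne⟩
      refine ⟨by omega, ?_⟩
      rwa [snoc_lt d c i _ (by omega), snoc_lt d c (i+1) _ (by omega)] at hne
    · rintro ⟨h, hne⟩
      refine ⟨by omega, ?_⟩
      rwa [snoc_lt d c i (by omega) (by omega), snoc_lt d c (i+1) (by omega) (by omega)]
  rw [e3]
  have hcond : (∃ h : n + 1 < n+2, (Fin.snoc d c : Fin (n+2) → Bool) ⟨n, Nat.lt_of_succ_lt h⟩ ≠ (Fin.snoc d c : Fin (n+2) → Bool) ⟨n + 1, h⟩) ↔ ¬ (d (Fin.last n) = c) := by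
    constructor
    · rintro ⟨h, hne⟩
      rw [snoc_lt d c n _ (by omega), snoc_top] at hne
      have e4 : (⟨n, by omega⟩ : Fin (n+1)) = Fin.last n := rfl
      rwa [e4] at hne
    · intro hne
      refine ⟨by omega, ?_⟩
      rw [snoc_lt d c n _ (by omega), snoc_top]
      have e4 : (⟨n, by omega⟩ : Fin (n+1)) = Fin.last n := rfl
      rwa [e4]
  by_cases hb : d (Fin.last n) = c
  · rw [if_neg (by rw [hcond]; exact fun hn => hn hb), if_pos hb]
    omega
  · rw [if_pos (hcond.mpr hb), if_neg hb]
    rw [Finset.card_insert_of_notMem (by simp)]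

def FF (x : ℤ) (n : ℕ) (b : Bool) : ℂ :=
  ∑ d ∈ (pathsTo x n).filter
    (fun d => ∀ h : 0 < n, d ⟨n - 1, Nat.sub_lt h Nat.one_pos⟩ = b),
    (-Complex.I) ^ (turns d)

lemma pathsTo_zero (x : ℤ) : pathsTo x 0 = ∅ := by
  rw [pathsTo]
  ext d
  simp

lemma FF_zero (x : ℤ) (b : Bool) : FF x 0 b = 0 := by
  rw [FF, pathsTo_zero]
  simp

lemma endpt_bounds {n : ℕ} {x : ℤ} {d : Fin (n+1) → Bool} (hd : d ∈ pathsTo x (n+1)) :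
    1 - n ≤ x ∧ x ≤ n + 1 := by
  rw [pathsTo, Finset.mem_filter] at hd
  obtain ⟨-, ⟨h0, hfst⟩, hend⟩ := hd
  subst hend
  rw [endpt, Fin.sum_univ_succ]
  constructor
  · have h1 : ∀ i : Fin n, (-1 : ℤ) ≤ (if d i.succ then (1:ℤ) else -1) := by
      intro i; split <;> omega
    have h2 := Finset.card_nsmul_le_sum Finset.univ _ _ (fun i _ => h1 i)
    simp only [Finset.card_univ, Fintype.card_fin, nsmul_eq_mul, mul_neg, mul_one] at h2
    have h3 : (⟨0, h0⟩ : Fin (n+1)) = 0 := rfl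
    rw [h3] at hfst
    rw [hfst]
    simp only [if_true]
    omega
  · have h1 : ∀ i : Fin n, (if d i.succ then (1:ℤ) else -1) ≤ 1 := by
      intro i; split <;> omega
    have h2 := Finset.sum_le_card_nsmul Finset.univ _ _ (fun i _ => h1 i)
    simp only [Finset.card_univ, Fintype.card_fin, nsmul_eq_mul, mul_one] at h2
    have : (if d 0 then (1:ℤ) else -1) ≤ 1 := by split <;> omega
    omega

lemma pathsTo_empty_of_lt {n : ℕ} {x : ℤ} (h : x < 1 - n ∨ (n:ℤ) + 1 < x) :
    pathsTo x (n+1) = ∅ := by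
  ext d
  simp only [Finset.notMem_empty, iff_false]
  intro hd
  have := endpt_bounds hd
  omega

lemma turns_len_one (d : Fin 1 → Bool) : turns d = 0 := by
  rw [turns, Finset.card_eq_zero, Finset.filter_eq_empty_iff]
  rintro i hi ⟨h, -⟩
  have : i < 1 := Finset.mem_range.mp hi
  omega

lemma FF_one_false (x : ℤ) : FF x 1 false = 0 := by
  rw [FF]
  convert Finset.sum_empty
  rw [Finset.filter_eq_empty_iff]
  intro d hd
  rw [pathsTo, Finset.mem_filter] at hd
  obtain ⟨-, ⟨h0, hfst⟩, -⟩ := hd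
  intro hall
  have := hall Nat.one_pos
  rw [hfst] at this
  simp at this

lemma FF_one_true (x : ℤ) : FF x 1 true = if x = 1 then 1 else 0 := by
  rw [FF]
  rcases eq_or_ne x 1 with rfl | hx
  · rw [if_pos rfl]
    have hset : ((pathsTo 1 1).filter
        (fun d => ∀ h : 0 < 1, d ⟨1 - 1, Nat.sub_lt h Nat.one_pos⟩ = true))
        = {fun _ => true} := by
      ext d
      simp only [Finset.mem_filter, Finset.mem_singleton, pathsTo, Finset.mem_univ,
        true_and]
      constructor
      · rintro ⟨⟨⟨h0, hfst⟩, -⟩, -⟩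
        funext i
        have : i = ⟨0, h0⟩ := by
          apply Fin.ext
          omega
        rw [this, hfst]
      · rintro rfl
        refine ⟨⟨⟨Nat.one_pos, rfl⟩, ?_⟩, fun _ => rfl⟩
        rw [endpt]
        simp
    rw [hset, Finset.sum_singleton, turns_len_one, pow_zero]
  · rw [if_neg hx]
    convert Finset.sum_empty
    rw [Finset.filter_eq_empty_iff]
    intro d hd
    rw [pathsTo, Finset.mem_filter] at hd
    obtain ⟨-, ⟨h0, hfst⟩, hend⟩ := hd
    exfalso
    apply hx
    rw [← hend, endpt]
    have : (⟨0, h0⟩ : Fin 1) = 0 := rfl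
    rw [this] at hfst
    simp [hfst]

lemma sum_split (x : ℤ) (m : ℕ) :
    ∑ d ∈ pathsTo x (m+1), (-Complex.I)^(turns d)
      = FF x (m+1) true + FF x (m+1) false := by
  classical
  rw [FF, FF,
    ← Finset.sum_filter_add_sum_filter_not (pathsTo x (m+1))
      (fun d => ∀ h : 0 < m+1, d ⟨m+1-1, Nat.sub_lt h Nat.one_pos⟩ = true)]
  congr 1
  apply Finset.sum_congr
  apply Finset.filter_congr
  intro d _
  constructor
  · intro hne h
    have := fun hh : d ⟨m+1-1, Nat.sub_lt h Nat.one_pos⟩ = true => hne (fun _ => hh)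
    revert this
    cases d ⟨m+1-1, Nat.sub_lt h Nat.one_pos⟩ <;> simp
  · intro hf hall
    have h1 := hf (Nat.succ_pos m)
    have h2 := hall (Nat.succ_pos m)
    rw [h1] at h2
    simp at h2
  · intro d _
    rfl

lemma FF_rec (x : ℤ) (m : ℕ) (b : Bool) :
    FF x (m+2) b = FF (x - (if b then 1 else -1)) (m+1) b
      + (-Complex.I) * FF (x - (if b then 1 else -1)) (m+1) (!b) := by
  classical
  set ε : ℤ := if b then 1 else -1 with hε
  have step1 : FF x (m+2) b
      = ∑ d ∈ pathsTo (x - ε) (m+1),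
          (-Complex.I)^(turns (Fin.snoc d b : Fin (m+2) → Bool)) := by
    rw [FF]
    refine Finset.sum_nbij' (fun d => Fin.init d) (fun d => (Fin.snoc d b : Fin (m+2) → Bool))
      ?_ ?_ ?_ ?_ ?_
    · -- init maps filtered set into pathsTo (x-ε) (m+1)
      intro d hd
      rw [Finset.mem_filter, pathsTo, Finset.mem_filter] at hd
      obtain ⟨⟨-, ⟨h0, hfst⟩, hend⟩, hl⟩ := hd
      have hlast : d (Fin.last (m+1)) = b := hl (Nat.succ_pos _)
      have h2 : (Fin.snoc (Fin.init d) b : Fin (m+2) → Bool) = d := by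
        rw [← hlast]; exact Fin.snoc_init_self d
      rw [pathsTo, Finset.mem_filter]
      refine ⟨Finset.mem_univ _, ⟨Nat.succ_pos _, ?_⟩, ?_⟩
      · show d (Fin.castSucc ⟨0, Nat.succ_pos _⟩) = true
        convert hfst using 2
        rfl
      · have h1 : endpt (Fin.snoc (Fin.init d) b : Fin (m+2) → Bool)
            = endpt (Fin.init d) + ε := by
          rw [endpt_snoc]
        rw [h2, hend] at h1
        show endpt (Fin.init d) = x - ε
        linarith
    · -- snoc maps pathsTo into the filtered set
      intro d hd
      rw [pathsTo, Finset.mem_filter] at hd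
      obtain ⟨-, ⟨h0, hfst⟩, hend⟩ := hd
      rw [Finset.mem_filter, pathsTo, Finset.mem_filter]
      refine ⟨⟨Finset.mem_univ _, ⟨Nat.succ_pos _, ?_⟩, ?_⟩, ?_⟩
      · show (Fin.snoc d b : Fin (m+2) → Bool) ⟨0, Nat.succ_pos _⟩ = true
        rw [snoc_lt d b 0 (Nat.succ_pos _) (Nat.succ_pos _)]
        exact hfst
      · show endpt (Fin.snoc d b : Fin (m+2) → Bool) = x
        rw [endpt_snoc, hend, ← hε]
        ring
      · intro h
        show (Fin.snoc d b : Fin (m+2) → Bool) ⟨m+1, by omega⟩ = b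
        exact snoc_top d b _
    · intro d hd
      rw [Finset.mem_filter] at hd
      have hlast : d (Fin.last (m+1)) = b := hd.2 (Nat.succ_pos _)
      show (Fin.snoc (Fin.init d) b : Fin (m+2) → Bool) = d
      rw [← hlast]; exact Fin.snoc_init_self d
    · intro d hd
      show Fin.init (Fin.snoc d b : Fin (m+2) → Bool) = d
      exact @Fin.init_snoc (m+1) (fun _ => Bool) b d
    · intro d hd
      rw [Finset.mem_filter] at hd
      have hlast : d (Fin.last (m+1)) = b := hd.2 (Nat.succ_pos _)
      have h2 : (Fin.snoc (Fin.init d) b : Fin (m+2) → Bool) = d := by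
        rw [← hlast]; exact Fin.snoc_init_self d
      show (-Complex.I)^(turns d)
          = (-Complex.I)^(turns (Fin.snoc (Fin.init d) b : Fin (m+2) → Bool))
      rw [h2]
  rw [step1]
  have step2 : ∀ d ∈ pathsTo (x - ε) (m+1),
      (-Complex.I)^(turns (Fin.snoc d b : Fin (m+2) → Bool))
        = (-Complex.I)^(turns d) * (if d (Fin.last m) = b then 1 else -Complex.I) := by
    intro d hd
    rw [turns_snoc, pow_add]
    congr 1
    by_cases h : d (Fin.last m) = b
    · rw [if_pos h, if_pos h, pow_zero]
    · rw [if_neg h, if_neg h, pow_one]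
  rw [Finset.sum_congr rfl step2]
  rw [← Finset.sum_filter_add_sum_filter_not (pathsTo (x - ε) (m+1))
    (fun d => d (Fin.last m) = b)]
  congr 1
  · rw [FF]
    have hfil : (pathsTo (x - ε) (m+1)).filter (fun d => d (Fin.last m) = b)
        = (pathsTo (x - ε) (m+1)).filter
            (fun d => ∀ h : 0 < m+1, d ⟨m+1-1, Nat.sub_lt h Nat.one_pos⟩ = b) := by
      apply Finset.filter_congr
      intro d _
      constructor
      · intro h _; exact h
      · intro h; exact h (Nat.succ_pos _)
    rw [← hfil]
    apply Finset.sum_congr rfl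
    intro d hd
    rw [Finset.mem_filter] at hd
    rw [if_pos hd.2, mul_one]
  · rw [FF, Finset.mul_sum]
    have hfil : (pathsTo (x - ε) (m+1)).filter (fun d => ¬ d (Fin.last m) = b)
        = (pathsTo (x - ε) (m+1)).filter
            (fun d => ∀ h : 0 < m+1, d ⟨m+1-1, Nat.sub_lt h Nat.one_pos⟩ = !b) := by
      apply Finset.filter_congr
      intro d _
      constructor
      · intro h _
        show d (Fin.last m) = !b
        revert h
        cases d (Fin.last m) <;> cases b <;> simp
      · intro h
        have := h (Nat.succ_pos _)
        revert this
        show d (Fin.last m) = !b → ¬ d (Fin.last m) = b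
        cases d (Fin.last m) <;> cases b <;> simp
    rw [← hfil]
    apply Finset.sum_congr rfl
    intro d hd
    rw [Finset.mem_filter] at hd
    rw [if_neg hd.2]
    ring

lemma FF_rec_true (x : ℤ) (m : ℕ) :
    FF x (m+2) true = FF (x-1) (m+1) true + (-Complex.I) * FF (x-1) (m+1) false := by
  have h := FF_rec x m true
  norm_num at h
  rw [h]; ring

lemma FF_rec_false (x : ℤ) (m : ℕ) :
    FF x (m+2) false = FF (x+1) (m+1) false + (-Complex.I) * FF (x+1) (m+1) true := by
  have h := FF_rec x m false
  norm_num [sub_neg_eq_add] at h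
  rw [h]; ring

lemma key (N : ℕ) : ∀ u v : ℕ, u + v = N →
    (FF ((u:ℤ) - v) (u+v) true
      = if u = 0 then 0 else if v = 0 then 1 else -(SB (u-1) (v-1) : ℂ)) ∧
    (FF ((u:ℤ) - v) (u+v) false
      = if u = 0 ∨ v = 0 then 0 else -Complex.I * (SA (u-1) (v-1) : ℂ)) := by
  induction N with
  | zero =>
    intro u v huv
    have hu : u = 0 := by omega
    have hv : v = 0 := by omega
    subst hu; subst hv
    simp [FF_zero]
  | succ n ih =>
    intro u v huv
    match n, ih with
    | 0, ih =>
      -- u + v = 1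
      rcases (by omega : u = 1 ∧ v = 0 ∨ u = 0 ∧ v = 1) with ⟨hu, hv⟩ | ⟨hu, hv⟩
      · subst hu; subst hv
        constructor
        · show FF ((1:ℤ) - 0) 1 true = 1
          rw [show ((1:ℤ) - 0) = 1 by ring, FF_one_true, if_pos rfl]
        · show FF ((1:ℤ) - 0) 1 false = 0
          rw [show ((1:ℤ) - 0) = 1 by ring, FF_one_false]
      · subst hu; subst hv
        constructor
        · show FF ((0:ℤ) - 1) 1 true = 0
          rw [FF_one_true, if_neg (by omega)]
        · show FF ((0:ℤ) - 1) 1 false = 0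
          rw [FF_one_false]
    | (n+1), ih =>
      -- u + v = n + 2
      have hlen : u + v = n + 2 := by omega
      rw [hlen]
      constructor
      · -- true part
        by_cases hu : u = 0
        · subst hu
          rw [if_pos rfl]
          have hemp : pathsTo ((↑(0:ℕ):ℤ) - ↑v) (n+2) = ∅ := by
            apply pathsTo_empty_of_lt (n := n+1)
            left
            have : (v:ℤ) = n+2 := by omega
            omega
          rw [FF, hemp]
          simp
        · rw [FF_rec_true]
          have hx : (u:ℤ) - v - 1 = ((u-1 : ℕ) : ℤ) - v := by omega
          have hl2 : n + 1 = (u-1) + v := by omega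
          rw [hx, hl2]
          obtain ⟨IHt, IHf⟩ := ih (u-1) v (by omega)
          rw [IHt, IHf, if_neg hu]
          by_cases hv : v = 0
          · subst hv
            simp [show ¬(u - 1 = 0) from by omega]
          · by_cases hu1 : u = 1
            · subst hu1
              simp [hv, SB_zero_left]
            · simp only [show ¬(u - 1 = 0) from by omega, if_false,
                show ¬(u - 1 = 0 ∨ v = 0) from by omega, hv, or_self, if_false]
              have hSB : SB (u-1) (v-1) = SB (u-2) (v-1) + SA (u-2) (v-1) := by
                have h := SB_succ_left (u-2) (v-1)
                rwa [show u-2+1 = u-1 by omega] at h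
              rw [show u-1-1 = u-2 from rfl, hSB]
              push_cast
              linear_combination ((SA (u-2) (v-1) : ℤ) : ℂ) * Complex.I_sq
      · -- false part
        by_cases hv : v = 0
        · subst hv
          rw [if_pos (Or.inr rfl), FF_rec_false]
          have hemp : pathsTo ((u:ℤ) - (↑(0:ℕ):ℤ) + 1) (n+1) = ∅ := by
            apply pathsTo_empty_of_lt (n := n)
            right
            have : (u:ℤ) = n+2 := by omega
            omega
          rw [FF, FF, hemp]
          simp
        · by_cases hu : u = 0
          · subst hu
            rw [if_pos (Or.inl rfl)]
            have hemp : pathsTo ((↑(0:ℕ):ℤ) - ↑v) (n+2) = ∅ := by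
              apply pathsTo_empty_of_lt (n := n+1)
              left
              have : (v:ℤ) = n+2 := by omega
              omega
            rw [FF, hemp]
            simp
          · rw [if_neg (by tauto), FF_rec_false]
            have hx : (u:ℤ) - v + 1 = ((u : ℕ) : ℤ) - ((v-1 : ℕ):ℤ) := by omega
            have hl2 : n + 1 = u + (v-1) := by omega
            rw [hx, hl2]
            obtain ⟨IHt, IHf⟩ := ih u (v-1) (by omega)
            rw [IHt, IHf]
            by_cases hv1 : v = 1
            · subst hv1
              simp [hu, SA_zero_right]
            · simp only [show ¬(u = 0 ∨ v - 1 = 0) from by omega, if_false, hu,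
                show ¬(v - 1 = 0) from by omega, or_self]
              have hSA : SA (u-1) (v-1) = SA (u-1) (v-2) - SB (u-1) (v-2) := by
                have h := SA_succ_right (u-1) (v-2)
                rwa [show v-2+1 = v-1 by omega] at h
              rw [show v-1-1 = v-2 from rfl, hSA]
              push_cast
              ring

lemma total_sum (T : ℕ) (hT : 1 ≤ T) :
    ∑ d ∈ pathsTo 0 (2*T), (-Complex.I)^(turns d)
      = -(SB (T-1) (T-1) : ℂ) + (-Complex.I * (SA (T-1) (T-1) : ℂ)) := by
  obtain ⟨m, hm⟩ : ∃ m, 2*T = m + 1 := ⟨2*T - 1, by omega⟩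
  obtain ⟨ht, hf⟩ := key (T+T) T T rfl
  rw [show ((T:ℤ) - T) = 0 by ring, show T + T = 2*T by ring] at ht hf
  rw [hm] at ht hf ⊢
  rw [sum_split, ht, hf]
  rw [if_neg (by omega), if_neg (by omega), if_neg (by omega : ¬(T = 0 ∨ T = 0))]

lemma a_eval (T : ℕ) (hT : 1 ≤ T) :
    a 0 (2*(T:ℤ)) = (((2:ℝ)^(((1:ℝ) - 2*T)/2) : ℝ) : ℂ)
      * ((SA (T-1) (T-1) : ℂ) - Complex.I * (SB (T-1) (T-1) : ℂ)) := by
  rw [a]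
  rw [show ((2*(T:ℤ))).toNat = 2*T from by omega]
  rw [total_sum T hT]
  have hexp : (2:ℂ) ^ ((1 - ((2*(T:ℤ) : ℤ) : ℂ))/2)
      = (((2:ℝ)^(((1:ℝ) - 2*T)/2) : ℝ) : ℂ) := by
    rw [Complex.ofReal_cpow (by norm_num : (0:ℝ) ≤ 2)]
    push_cast
    norm_num
  rw [hexp]
  linear_combination -(((2:ℝ)^(((1:ℝ) - 2*(T:ℝ))/2) : ℝ) : ℂ)
    * ((SA (T-1) (T-1) : ℤ) : ℂ) * Complex.I_sq

lemma a_val_two (n : ℕ) :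
    a 0 (4*(n:ℤ)+2)
      = ((((2:ℝ)^((-(4*(n:ℝ)+1))/2) * ((-1)^n * ((2*n).choose n)) : ℝ)) : ℂ) := by
  rw [show (4*(n:ℤ)+2) = 2*((2*n+1 : ℕ) : ℤ) by push_cast; ring]
  rw [a_eval (2*n+1) (by omega)]
  rw [show 2*n+1-1 = 2*n from rfl, SA_diag_even n, SB_diag_even n]
  rw [show ((1:ℝ) - 2*((2*n+1:ℕ):ℝ))/2 = (-(4*(n:ℝ)+1))/2 by push_cast; ring]
  push_cast
  ring

lemma a_val_four (m : ℕ) :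
    a 0 (4*((m+1:ℕ):ℤ))
      = ((((2:ℝ)^((-(4*((m+1:ℕ):ℝ)-1))/2) * ((-1)^(m+1) * ((2*(m+1)-1).choose (m+1))) : ℝ)) : ℂ)
        * Complex.I := by
  rw [show (4*((m+1:ℕ):ℤ)) = 2*((2*(m+1) : ℕ) : ℤ) by push_cast; ring]
  rw [a_eval (2*(m+1)) (by omega)]
  rw [show 2*(m+1)-1 = 2*m+1 from by omega, SA_diag_odd m, SB_diag_odd m]
  rw [show ((1:ℝ) - 2*((2*(m+1):ℕ):ℝ))/2 = (-(4*((m+1:ℕ):ℝ)-1))/2 by push_cast; ring]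
  push_cast
  ring

lemma a_zero : a 0 0 = 0 := by
  rw [a]
  rw [show ((0:ℤ)).toNat = 0 from rfl, pathsTo_zero]
  simp

/-- Particular values of the basic model at x = 0. -/
theorem particular_values (n : ℕ) :
    (a 0 (4 * (n : ℤ) + 2)).re
      = (-1 : ℝ) ^ n * (2 : ℝ) ^ (-(4 * (n : ℝ) + 1) / 2) * ((2 * n).choose n) ∧
    (a 0 (4 * (n : ℤ))).re = 0 ∧
    (a 0 (4 * (n : ℤ) + 2)).im = 0 ∧
    (1 ≤ n → (a 0 (4 * (n : ℤ))).im
      = (-1 : ℝ) ^ n * (2 : ℝ) ^ (-(4 * (n : ℝ) - 1) / 2) * ((2 * n - 1).choose n)) := by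
  refine ⟨?_, ?_, ?_, ?_⟩
  · rw [a_val_two, Complex.ofReal_re]
    ring
  · rcases Nat.eq_zero_or_pos n with rfl | hn
    · norm_num [a_zero]
    · obtain ⟨m, rfl⟩ : ∃ m, n = m+1 := ⟨n-1, by omega⟩
      rw [a_val_four m, Complex.mul_I_re, Complex.ofReal_im]
      norm_num
  · rw [a_val_two, Complex.ofReal_im]
  · intro hn
    obtain ⟨m, rfl⟩ : ∃ m, n = m+1 := ⟨n-1, by omega⟩
    rw [a_val_four m, Complex.mul_I_im, Complex.ofReal_re]
    push_cast
    ring
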